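/- arXiv:2306.05815 — 2 statements merged into one kernel-verified Lean document; each statement's English description precedes it below -/
import Mathlib

section
/- Let G ∈ ℝ^{n×n} be symmetric positive semidefinite, let s ≤ n, let u₁,…,uₛ ∈ ℝⁿ be orthonormal eigenvectors of G with G uⱼ = λⱼ uⱼ and λⱼ ≥ 0, and let H ∈ ℝ^{n×s} be the matrix whose j-th column is √(λⱼ) uⱼ. Then (1/2) Tr(Hᵀ H) − Tr √(Hᵀ G H) = −(1/2) Σ_{j=1}^s λⱼ. -/
open scoped Matrix

lemma transposeMulMul_posSemidef {n s : ℕ} {G : Matrix (Fin n) (Fin n) ℝ}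
    (hG : G.PosSemidef) (H : Matrix (Fin n) (Fin s) ℝ) : (Hᵀ * G * H).PosSemidef := by
  simpa [Matrix.conjTranspose_eq_transpose_of_trivial] using hG.conjTranspose_mul_mul_same H

section

open scoped ComplexOrder

/-- The positive semidefinite square root of a positive semidefinite matrix, as `Matrix.PosSemidef.sqrt`
was defined in Mathlib (December 2024); that definition has since been removed. -/
noncomputable def Matrix.PosSemidef.sqrt {n 𝕜 : Type*} [Fintype n] [DecidableEq n] [RCLike 𝕜]
    {A : Matrix n n 𝕜} (hA : A.PosSemidef) : Matrix n n 𝕜 :=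
  hA.1.eigenvectorUnitary.1 * Matrix.diagonal ((↑) ∘ (√·) ∘ hA.1.eigenvalues) *
    (star hA.1.eigenvectorUnitary : Matrix n n 𝕜)

end

/-- If the columns of `H` are `√λⱼ uⱼ` for orthonormal eigenvectors `uⱼ` of `G` with
nonnegative eigenvalues `λⱼ`, then the dual KPCA objective at `H` equals `-(1/2) Σⱼ λⱼ`. -/
theorem dual_objective_at_svd {n s : ℕ} (hs : s ≤ n)
    {G : Matrix (Fin n) (Fin n) ℝ} (hG : G.PosSemidef)
    (u : Fin s → (Fin n → ℝ)) (lam : Fin s → ℝ)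
    (horth : ∀ j k : Fin s, u j ⬝ᵥ u k = if j = k then (1 : ℝ) else 0)
    (heig : ∀ j : Fin s, G *ᵥ u j = lam j • u j)
    (hnn : ∀ j : Fin s, 0 ≤ lam j)
    (H : Matrix (Fin n) (Fin s) ℝ)
    (hH : H = Matrix.of fun i j => Real.sqrt (lam j) * u j i) :
    (1 / 2) * (Hᵀ * H).trace - (transposeMulMul_posSemidef hG H).sqrt.trace
      = -(1 / 2) * ∑ j : Fin s, lam j := by
  have hHtH : Hᵀ * H = Matrix.diagonal lam := by
    ext j k
    simp only [Matrix.mul_apply, Matrix.transpose_apply, hH, Matrix.of_apply,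
      Matrix.diagonal_apply]
    have := horth j k
    simp only [dotProduct] at this
    calc ∑ i, (Real.sqrt (lam j) * u j i) * (Real.sqrt (lam k) * u k i)
        = Real.sqrt (lam j) * Real.sqrt (lam k) * ∑ i, u j i * u k i := by
          rw [Finset.mul_sum]; congr 1; ext i; ring
      _ = Real.sqrt (lam j) * Real.sqrt (lam k) * if j = k then 1 else 0 := by rw [this]
      _ = _ := by
          by_cases h : j = k
          · subst h; simp [Real.mul_self_sqrt (hnn j)]
          · simp [h]
  have hHGH : Hᵀ * G * H = Matrix.diagonal lam ^ 2 := by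
    have hGH : G * H = Matrix.of fun i k => Real.sqrt (lam k) * (lam k * u k i) := by
      ext i k
      have := congrFun (heig k) i
      simp only [Matrix.mulVec, dotProduct, Pi.smul_apply, smul_eq_mul] at this
      simp only [Matrix.mul_apply, hH, Matrix.of_apply]
      calc ∑ m, G i m * (Real.sqrt (lam k) * u k m)
          = Real.sqrt (lam k) * ∑ m, G i m * u k m := by
            rw [Finset.mul_sum]; congr 1; ext m; ring
        _ = _ := by rw [this]
    rw [Matrix.mul_assoc, hGH]
    ext j k
    simp only [Matrix.mul_apply, Matrix.transpose_apply, hH, Matrix.of_apply, pow_two,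
      Matrix.diagonal_mul_diagonal, Matrix.diagonal_apply]
    have := horth j k
    simp only [dotProduct] at this
    calc ∑ i, (Real.sqrt (lam j) * u j i) * (Real.sqrt (lam k) * (lam k * u k i))
        = Real.sqrt (lam j) * Real.sqrt (lam k) * lam k * ∑ i, u j i * u k i := by
          rw [Finset.mul_sum]; congr 1; ext i; ring
      _ = Real.sqrt (lam j) * Real.sqrt (lam k) * lam k * if j = k then 1 else 0 := by rw [this]
      _ = _ := by
          by_cases h : j = k
          · subst h; rw [Real.mul_self_sqrt (hnn j)]; simp [mul_comm]
          · simp [h]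
  have hdiag : (Matrix.diagonal lam).PosSemidef :=
    Matrix.posSemidef_diagonal_iff.mpr (by simpa using hnn)
  have hsqrt : (transposeMulMul_posSemidef hG H).sqrt = Matrix.diagonal lam := by
    open MatrixOrder in
    have e1 : (transposeMulMul_posSemidef hG H).sqrt = cfc Real.sqrt (Hᵀ * G * H) := by
      rw [(transposeMulMul_posSemidef hG H).1.cfc_eq, Matrix.IsHermitian.cfc,
        Unitary.conjStarAlgAut_apply]
      rfl
    open MatrixOrder in
    rw [e1, ← cfcₙ_eq_cfc, ← CFC.sqrt_eq_real_sqrt _ (transposeMulMul_posSemidef hG H).nonneg]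
    open MatrixOrder in
    exact CFC.sqrt_unique (by rw [hHGH, pow_two]) hdiag.nonneg
  rw [hHtH, hsqrt, Matrix.trace_diagonal]
  ring
end

section
/- Let 𝓗 be a real Hilbert space, v₁,…,vₙ ∈ 𝓗 with positive definite Gram matrix G ∈ ℝ^{n×n}, G_{ij} = ⟨vᵢ, vⱼ⟩, and let Γ : 𝓗ˢ → ℝ^{n×s} be the operator (ΓW)_{ij} = ⟨vᵢ, wⱼ⟩. Let Ψ : ℝ^{n×s} → ℝ ∪ {+∞} be proper, convex and lower semicontinuous, and let f = (1/2)‖·‖_F² □ Ψ be its Moreau envelope, f(Y) = inf_Z ( (1/2)‖Y − Z‖_F² + Ψ(Z) ). Then the following equality holds in the extended reals: inf over W ∈ 𝓗ˢ with 𝒢(W) ⪯ I_s of ( −f(ΓW) ) equals inf over H ∈ ℝ^{n×s} of ( (1/2)‖H‖_F² + Ψ⋆(H) − Tr √(Hᵀ G H) ), where Ψ⋆ is the Fenchel conjugate of Ψ. -/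
open scoped RealInnerProductSpace Matrix MatrixOrder

/-- The Gram matrix `𝒢(W)` of a tuple `W = (w₁, …, wₛ)` of vectors of a real Hilbert space. -/
noncomputable def gram {𝓗 : Type*} [NormedAddCommGroup 𝓗] [InnerProductSpace ℝ 𝓗]
    {s : ℕ} (W : Fin s → 𝓗) : Matrix (Fin s) (Fin s) ℝ :=
  Matrix.of fun i j => ⟪W i, W j⟫

/-- The Frobenius inner product `⟨A, B⟩ = Tr(Aᵀ B)` on `ℝ^{n×s}`. -/
def frobInner {n s : ℕ} (A B : Matrix (Fin n) (Fin s) ℝ) : ℝ := (Aᵀ * B).trace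

/-- The Moreau envelope `f = (1/2)‖·‖_F² □ Ψ` of `Ψ`. -/
noncomputable def moreau {n s : ℕ} (Ψ : Matrix (Fin n) (Fin s) ℝ → EReal)
    (Y : Matrix (Fin n) (Fin s) ℝ) : EReal :=
  ⨅ Z : Matrix (Fin n) (Fin s) ℝ,
    (((1 / 2) * frobInner (Y - Z) (Y - Z) : ℝ) : EReal) + Ψ Z

/-- The Fenchel conjugate `Ψ⋆` w.r.t. the Frobenius inner product. -/
noncomputable def fenchelConj {n s : ℕ} (Ψ : Matrix (Fin n) (Fin s) ℝ → EReal)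
    (H : Matrix (Fin n) (Fin s) ℝ) : EReal :=
  ⨆ Y : Matrix (Fin n) (Fin s) ℝ, ((frobInner H Y : ℝ) : EReal) - Ψ Y

namespace KpcaAux

variable {𝓗 : Type*} [NormedAddCommGroup 𝓗] [InnerProductSpace ℝ 𝓗] {n s : ℕ}

lemma frobInner_eq_sum (A B : Matrix (Fin n) (Fin s) ℝ) :
    frobInner A B = ∑ j, ∑ i, A i j * B i j := by
  simp [frobInner, Matrix.trace, Matrix.mul_apply, Matrix.diag]

lemma frobInner_comm (A B : Matrix (Fin n) (Fin s) ℝ) : frobInner A B = frobInner B A := by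
  simp [frobInner_eq_sum, mul_comm]

lemma frobInner_self_nonneg (A : Matrix (Fin n) (Fin s) ℝ) : 0 ≤ frobInner A A := by
  rw [frobInner_eq_sum]
  exact Finset.sum_nonneg fun j _ => Finset.sum_nonneg fun i _ => mul_self_nonneg _

lemma frobInner_sub_right (A B C : Matrix (Fin n) (Fin s) ℝ) :
    frobInner A (B - C) = frobInner A B - frobInner A C := by
  simp [frobInner_eq_sum, mul_sub, Finset.sum_sub_distrib]

lemma frobInner_expand (A B : Matrix (Fin n) (Fin s) ℝ) :
    frobInner (A - B) (A - B) = frobInner A A - 2 * frobInner A B + frobInner B B := by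
  simp only [frobInner_eq_sum, Matrix.sub_apply, Finset.mul_sum]
  rw [← Finset.sum_sub_distrib, ← Finset.sum_add_distrib]
  refine Finset.sum_congr rfl fun j _ => ?_
  rw [← Finset.sum_sub_distrib, ← Finset.sum_add_distrib]
  refine Finset.sum_congr rfl fun i _ => by ring

lemma young (H D : Matrix (Fin n) (Fin s) ℝ) :
    frobInner H D ≤ (1/2) * frobInner D D + (1/2) * frobInner H H := by
  have h := frobInner_self_nonneg (D - H)
  rw [frobInner_expand] at h
  nlinarith [h, frobInner_comm H D]

/-- A lower semicontinuous `EReal`-valued function attains its minimum on a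
nonempty compact closed set. -/
lemma lsc_exists_min {X : Type*} [TopologicalSpace X] {s : Set X} (hs : IsCompact s)
    (hsc : IsClosed s) (hne : s.Nonempty) {f : X → EReal} (hf : LowerSemicontinuous f) :
    ∃ x ∈ s, ∀ y ∈ s, f x ≤ f y := by
  set m : EReal := ⨅ y : s, f y with hm
  by_cases htop : ∃ y₀ : s, f y₀ ≠ ⊤
  · obtain ⟨y₀, hy₀⟩ := htop
    have hmlt : m < ⊤ := lt_of_le_of_lt (iInf_le _ y₀) (lt_top_iff_ne_top.2 hy₀)
    have : Nonempty {a : EReal // m < a} := ⟨⟨⊤, hmlt⟩⟩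
    set t : {a : EReal // m < a} → Set X := fun a => s ∩ {x | f x ≤ a.1} with ht
    have htn : ∀ a : {a : EReal // m < a}, (t a).Nonempty := by
      rintro ⟨a, ha⟩
      rw [hm, iInf_lt_iff] at ha
      obtain ⟨⟨y, hy⟩, hya⟩ := ha
      exact ⟨y, hy, le_of_lt hya⟩
    have htd : Directed (· ⊇ ·) t := by
      rintro ⟨a, ha⟩ ⟨b, hb⟩
      refine ⟨⟨min a b, lt_min ha hb⟩, ?_, ?_⟩
      · exact Set.inter_subset_inter_right _ fun x hx => le_trans hx (min_le_left a b)
      · exact Set.inter_subset_inter_right _ fun x hx => le_trans hx (min_le_right a b)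
    have hcl : ∀ a : {a : EReal // m < a}, IsClosed (t a) :=
      fun a => hsc.inter (hf.isClosed_preimage a.1)
    obtain ⟨x, hx⟩ := IsCompact.nonempty_iInter_of_directed_nonempty_isCompact_isClosed t htd htn
      (fun a => hs.inter_right (hf.isClosed_preimage a.1)) hcl
    have hxs : x ∈ s := (Set.mem_iInter.1 hx ⟨⊤, hmlt⟩).1
    refine ⟨x, hxs, fun y hy => ?_⟩
    have hxm : f x ≤ m := by
      refine le_of_forall_gt_imp_ge_of_dense fun a ha => ?_
      exact (Set.mem_iInter.1 hx ⟨a, ha⟩).2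
    exact hxm.trans (iInf_le (fun y : s => f y) ⟨y, hy⟩)
  · push_neg at htop
    obtain ⟨x, hx⟩ := hne
    exact ⟨x, hx, fun y hy => (htop ⟨y, hy⟩) ▸ le_top⟩


lemma frobInner_smul_right (c : ℝ) (A B : Matrix (Fin n) (Fin s) ℝ) :
    frobInner A (c • B) = c * frobInner A B := by
  simp only [frobInner_eq_sum, Matrix.smul_apply, smul_eq_mul, Finset.mul_sum]
  exact Finset.sum_congr rfl fun j _ => Finset.sum_congr rfl fun i _ => by ring

lemma frobInner_smul_left (c : ℝ) (A B : Matrix (Fin n) (Fin s) ℝ) :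
    frobInner (c • A) B = c * frobInner A B := by
  simp only [frobInner_eq_sum, Matrix.smul_apply, smul_eq_mul, Finset.mul_sum]
  exact Finset.sum_congr rfl fun j _ => Finset.sum_congr rfl fun i _ => by ring

lemma entry_sq_le (A : Matrix (Fin n) (Fin s) ℝ) (i : Fin n) (j : Fin s) :
    A i j * A i j ≤ frobInner A A := by
  rw [frobInner_eq_sum]
  have h1 : A i j * A i j ≤ ∑ i', A i' j * A i' j :=
    Finset.single_le_sum (fun i' _ => mul_self_nonneg (A i' j)) (Finset.mem_univ i)
  exact h1.trans (Finset.single_le_sum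
    (fun j' _ => Finset.sum_nonneg fun i' _ => mul_self_nonneg (A i' j')) (Finset.mem_univ j))

lemma frob_lower (E D : Matrix (Fin n) (Fin s) ℝ) :
    (1/2) * frobInner D D - frobInner E E ≤ frobInner (E - D) (E - D) := by
  have e1 := frobInner_expand E D
  have e2 : frobInner (E - (1/2 : ℝ) • D) (E - (1/2 : ℝ) • D)
      = frobInner E E - frobInner E D + (1/4) * frobInner D D := by
    rw [frobInner_expand, frobInner_smul_right, frobInner_smul_left, frobInner_smul_right]
    ring
  have h := frobInner_self_nonneg (E - (1/2 : ℝ) • D)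
  linarith

/-- The closed sup-norm box of radius `R` around `Z₀`. -/
def box (Z₀ : Matrix (Fin n) (Fin s) ℝ) (R : ℝ) : Set (Matrix (Fin n) (Fin s) ℝ) :=
  Set.univ.pi fun i => Set.univ.pi fun j => Set.Icc (Z₀ i j - R) (Z₀ i j + R)

lemma mem_box {Z₀ : Matrix (Fin n) (Fin s) ℝ} {R : ℝ} {Z : Matrix (Fin n) (Fin s) ℝ} :
    Z ∈ box Z₀ R ↔ ∀ i j, |Z i j - Z₀ i j| ≤ R := by
  constructor
  · intro h i j
    have h2 := h i (Set.mem_univ i) j (Set.mem_univ j)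
    rw [Set.mem_Icc] at h2
    rw [abs_sub_le_iff]
    exact ⟨by linarith [h2.1, h2.2], by linarith [h2.1, h2.2]⟩
  · intro h i _ j _
    have h2 := h i j
    rw [abs_sub_le_iff] at h2
    exact Set.mem_Icc.2 ⟨by linarith [h2.1, h2.2], by linarith [h2.1, h2.2]⟩

lemma box_compact (Z₀ : Matrix (Fin n) (Fin s) ℝ) (R : ℝ) : IsCompact (box Z₀ R) :=
  isCompact_univ_pi fun i => isCompact_univ_pi fun j => isCompact_Icc

lemma box_closed (Z₀ : Matrix (Fin n) (Fin s) ℝ) (R : ℝ) : IsClosed (box Z₀ R) :=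
  isClosed_set_pi fun i _ => isClosed_set_pi fun j _ => isClosed_Icc

lemma self_mem_box (Z₀ : Matrix (Fin n) (Fin s) ℝ) {R : ℝ} (hR : 0 ≤ R) : Z₀ ∈ box Z₀ R :=
  mem_box.2 fun i j => by simpa using hR

/-- The objective of the Moreau envelope. -/
noncomputable def phi (Ψ : Matrix (Fin n) (Fin s) ℝ → EReal)
    (Y Z : Matrix (Fin n) (Fin s) ℝ) : EReal :=
  (((1 / 2) * frobInner (Y - Z) (Y - Z) : ℝ) : EReal) + Ψ Z

lemma phi_lsc (Ψ : Matrix (Fin n) (Fin s) ℝ → EReal) (hΨ_lsc : LowerSemicontinuous Ψ)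
    (Y : Matrix (Fin n) (Fin s) ℝ) : LowerSemicontinuous (phi Ψ Y) := by
  have hentry : ∀ (i : Fin n) (j : Fin s),
      Continuous fun Z : Matrix (Fin n) (Fin s) ℝ => Z i j := fun i j =>
    (continuous_apply j).comp (continuous_apply (A := fun _ : Fin n => Fin s → ℝ) i)
  have hq : Continuous fun Z : Matrix (Fin n) (Fin s) ℝ =>
      ((1 / 2) * frobInner (Y - Z) (Y - Z) : ℝ) := by
    simp only [frobInner_eq_sum, Matrix.sub_apply]
    exact continuous_const.mul (continuous_finset_sum _ fun j _ =>
      continuous_finset_sum _ fun i _ =>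
        ((continuous_const.sub (hentry i j)).mul (continuous_const.sub (hentry i j))))
  have hqE : Continuous fun Z : Matrix (Fin n) (Fin s) ℝ =>
      (((1 / 2) * frobInner (Y - Z) (Y - Z) : ℝ) : EReal) :=
    continuous_coe_real_ereal.comp hq
  exact hqE.lowerSemicontinuous.add' hΨ_lsc fun x =>
    EReal.continuousAt_add (Or.inl (EReal.coe_ne_top _)) (Or.inl (EReal.coe_ne_bot _))


lemma exists_prox (Ψ : Matrix (Fin n) (Fin s) ℝ → EReal)
    (hΨ_ne_top : ∃ Y, Ψ Y ≠ ⊤) (hΨ_ne_bot : ∀ Y, Ψ Y ≠ ⊥)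
    (hΨ_convex : ∀ (Y Z : Matrix (Fin n) (Fin s) ℝ) (a b : ℝ),
      0 ≤ a → 0 ≤ b → a + b = 1 →
      Ψ (a • Y + b • Z) ≤ (a : EReal) * Ψ Y + (b : EReal) * Ψ Z)
    (hΨ_lsc : LowerSemicontinuous Ψ)
    (Y : Matrix (Fin n) (Fin s) ℝ) :
    ∃ Z, Ψ Z ≠ ⊤ ∧ ∀ Z', phi Ψ Y Z ≤ phi Ψ Y Z' := by
  obtain ⟨Z₀, hZ₀⟩ := hΨ_ne_top
  obtain ⟨ψ₀, hψ₀⟩ : ∃ r : ℝ, Ψ Z₀ = (r : EReal) :=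
    ⟨(Ψ Z₀).toReal, (EReal.coe_toReal hZ₀ (hΨ_ne_bot Z₀)).symm⟩
  obtain ⟨xm, hxm_mem, hxm⟩ := lsc_exists_min (box_compact Z₀ 1) (box_closed Z₀ 1)
    ⟨Z₀, self_mem_box Z₀ zero_le_one⟩ hΨ_lsc
  have hxm_ne_top : Ψ xm ≠ ⊤ := fun h =>
    hZ₀ (top_le_iff.1 (h ▸ hxm Z₀ (self_mem_box Z₀ zero_le_one)))
  obtain ⟨mR, hmR⟩ : ∃ r : ℝ, Ψ xm = (r : EReal) :=
    ⟨_, (EReal.coe_toReal hxm_ne_top (hΨ_ne_bot xm)).symm⟩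
  set a2 : ℝ := frobInner (Y - Z₀) (Y - Z₀) with ha2
  set c : ℝ := 1/2 * a2 + ψ₀ with hcdef
  set C₁ : ℝ := |mR| + |ψ₀| with hC₁
  set R : ℝ := max (4*(C₁+1)) (a2/2 + |ψ₀| + |c|) with hRdef
  clear_value a2 c C₁ R
  have hC₁0 : 0 ≤ C₁ := by rw [hC₁]; positivity
  have hR0 : (0:ℝ) ≤ R := by rw [hRdef]; exact le_trans (by positivity) (le_max_left _ _)
  have hφZ₀ : phi Ψ Y Z₀ = (c : EReal) := by
    rw [phi, hψ₀, ← EReal.coe_add, hcdef, ha2]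
  have key : ∀ Z, Z ∉ box Z₀ R → phi Ψ Y Z₀ ≤ phi Ψ Y Z := by
    intro Z hZbox
    by_contra hlt'
    push_neg at hlt'
    have hZt : Ψ Z ≠ ⊤ := by
      intro h
      rw [phi, h, EReal.add_top_of_ne_bot (EReal.coe_ne_bot _), hφZ₀] at hlt'
      exact (not_top_lt hlt')
    obtain ⟨ψ, hψ⟩ : ∃ r : ℝ, Ψ Z = (r : EReal) :=
      ⟨_, (EReal.coe_toReal hZt (hΨ_ne_bot Z)).symm⟩
    have hreal : 1/2 * frobInner (Y - Z) (Y - Z) + ψ < c := by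
      rw [phi, hψ, ← EReal.coe_add, hφZ₀] at hlt'
      exact_mod_cast hlt'
    obtain ⟨i₀, j₀, hij⟩ : ∃ i j, R < |Z i j - Z₀ i j| := by
      by_contra h
      push_neg at h
      exact hZbox (mem_box.2 h)
    set D : Matrix (Fin n) (Fin s) ℝ := Z - Z₀ with hD
    set r : ℝ := Real.sqrt (frobInner D D) with hr
    have hDnn := frobInner_self_nonneg D
    have hr2 : r * r = frobInner D D := Real.mul_self_sqrt hDnn
    have hrnn : 0 ≤ r := Real.sqrt_nonneg _
    have hentry : ∀ i j, |D i j| ≤ r := by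
      intro i j
      rw [hr, ← Real.sqrt_mul_self (abs_nonneg (D i j))]
      exact Real.sqrt_le_sqrt (by rw [abs_mul_abs_self]; exact entry_sq_le D i j)
    have hrR : R < r := lt_of_lt_of_le hij (by simpa [hD, Matrix.sub_apply] using hentry i₀ j₀)
    have h44 : 4*(C₁+1) ≤ R := hRdef ▸ le_max_left _ _
    have hr0 : (0:ℝ) < r := by linarith
    set t : ℝ := r⁻¹ with htdef
    have ht0 : 0 < t := by rw [htdef]; exact inv_pos.2 hr0
    have htr : t * r = 1 := by rw [htdef]; exact inv_mul_cancel₀ (ne_of_gt hr0)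
    clear_value D r t
    have hZ₁mem : (1 - t) • Z₀ + t • Z ∈ box Z₀ 1 := by
      rw [mem_box]
      intro i j
      have he : ((1 - t) • Z₀ + t • Z) i j - Z₀ i j = t * D i j := by
        simp only [Matrix.add_apply, Matrix.smul_apply, smul_eq_mul, hD, Matrix.sub_apply]
        ring
      rw [he, abs_mul, abs_of_pos ht0]
      calc t * |D i j| ≤ t * r := by nlinarith [hentry i j]
        _ = 1 := htr
    have hconv := hΨ_convex Z₀ Z (1 - t) t (by nlinarith [htr]) (le_of_lt ht0) (by ring)
    have hml : (mR : EReal) ≤ Ψ ((1 - t) • Z₀ + t • Z) := hmR ▸ hxm _ hZ₁mem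
    have hml' : mR ≤ (1 - t) * ψ₀ + t * ψ := by
      have h2 : Ψ ((1 - t) • Z₀ + t • Z) ≤ (((1-t) * ψ₀ + t * ψ : ℝ) : EReal) := by
        rw [EReal.coe_add, EReal.coe_mul, EReal.coe_mul, ← hψ₀, ← hψ]
        exact hconv
      exact_mod_cast le_trans hml h2
    have hψlb : r * (mR - ψ₀) + ψ₀ ≤ ψ := by
      have h3 : r * (mR - (1-t)*ψ₀) ≤ r * (t * ψ) := by
        apply mul_le_mul_of_nonneg_left _ (le_of_lt hr0)
        linarith
      have h4 : r * (t * ψ) = ψ := by rw [← mul_assoc, mul_comm r t, htr, one_mul]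
      have hrt : r * t = 1 := by rw [mul_comm]; exact htr
      have h5 : r * (mR - (1-t)*ψ₀) = r*(mR - ψ₀) + (r*t)*ψ₀ := by ring
      rw [hrt, one_mul] at h5
      linarith
    have hq : 1/2 * frobInner D D - a2 ≤ frobInner (Y - Z) (Y - Z) := by
      have h5 := frob_lower (Y - Z₀) D
      have hYZ : Y - Z = (Y - Z₀) - D := by rw [hD]; abel
      rw [hYZ]
      linarith
    have hrc : a2/2 + |ψ₀| + |c| ≤ R := hRdef ▸ le_max_right _ _
    have hq2 : 1/4*(r*r) - a2/2 ≤ 1/2 * frobInner (Y - Z) (Y - Z) := by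
      rw [hr2]; linarith
    have hmc : -C₁ ≤ mR - ψ₀ := by
      have := neg_abs_le mR
      have := le_abs_self ψ₀
      rw [hC₁]; linarith
    have hψ4 : -(r*C₁) - |ψ₀| ≤ ψ := by
      have h7 : r * (-C₁) ≤ r * (mR - ψ₀) := mul_le_mul_of_nonneg_left hmc (le_of_lt hr0)
      have h8 := neg_abs_le ψ₀
      nlinarith [hψlb]
    have hmul' : (0:ℝ) ≤ r*r - 4*(C₁+1)*r := by
      have h9 : (0:ℝ) ≤ r - 4*(C₁+1) := by linarith
      nlinarith [mul_nonneg (le_of_lt hr0) h9]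
    linarith [hreal, hq2, hψ4, hmul', hrR, hrc, le_abs_self c]
  obtain ⟨Zm, hZm_mem, hZm⟩ := lsc_exists_min (box_compact Z₀ R) (box_closed Z₀ R)
    ⟨Z₀, self_mem_box Z₀ hR0⟩ (phi_lsc Ψ hΨ_lsc Y)
  have hglob : ∀ Z', phi Ψ Y Zm ≤ phi Ψ Y Z' := by
    intro Z'
    by_cases h : Z' ∈ box Z₀ R
    · exact hZm Z' h
    · exact le_trans (hZm Z₀ (self_mem_box Z₀ hR0)) (key Z' h)
  refine ⟨Zm, ?_, hglob⟩
  intro h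
  have h6 := hglob Z₀
  rw [phi, h, EReal.add_top_of_ne_bot (EReal.coe_ne_bot _), hφZ₀] at h6
  simp at h6

lemma prox_subgradient (Ψ : Matrix (Fin n) (Fin s) ℝ → EReal)
    (hΨ_ne_bot : ∀ Y, Ψ Y ≠ ⊥)
    (hΨ_convex : ∀ (Y Z : Matrix (Fin n) (Fin s) ℝ) (a b : ℝ),
      0 ≤ a → 0 ≤ b → a + b = 1 →
      Ψ (a • Y + b • Z) ≤ (a : EReal) * Ψ Y + (b : EReal) * Ψ Z)
    {Y Z : Matrix (Fin n) (Fin s) ℝ} {ψZ : ℝ} (hψZ : Ψ Z = (ψZ : EReal))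
    (hmin : ∀ Z', phi Ψ Y Z ≤ phi Ψ Y Z') (Y' : Matrix (Fin n) (Fin s) ℝ) :
    ((frobInner (Y - Z) (Y' - Z) + ψZ : ℝ) : EReal) ≤ Ψ Y' := by
  by_cases hY't : Ψ Y' = ⊤
  · rw [hY't]; exact le_top
  obtain ⟨ψ', hψ'⟩ : ∃ r : ℝ, Ψ Y' = (r : EReal) :=
    ⟨_, (EReal.coe_toReal hY't (hΨ_ne_bot Y')).symm⟩
  rw [hψ', EReal.coe_le_coe_iff]
  set D : Matrix (Fin n) (Fin s) ℝ := Y' - Z with hD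
  have ht : ∀ t : ℝ, 0 < t → t ≤ 1 →
      frobInner (Y - Z) D + ψZ ≤ (t/2) * frobInner D D + ψ' := by
    intro t ht0 ht1
    have hc := hΨ_convex Z Y' (1-t) t (by linarith) (le_of_lt ht0) (by ring)
    have hZt_le : Ψ ((1-t) • Z + t • Y') ≤ (((1-t)*ψZ + t*ψ' : ℝ) : EReal) := by
      rw [EReal.coe_add, EReal.coe_mul, EReal.coe_mul, ← hψZ, ← hψ']
      exact hc
    have hchain : phi Ψ Y Z ≤
        (((1/2) * frobInner (Y - ((1-t) • Z + t • Y')) (Y - ((1-t) • Z + t • Y'))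
          + ((1-t)*ψZ + t*ψ') : ℝ) : EReal) := by
      refine le_trans (hmin ((1-t) • Z + t • Y')) ?_
      rw [phi, EReal.coe_add]
      exact add_le_add_right hZt_le _
    rw [phi, hψZ, ← EReal.coe_add, EReal.coe_le_coe_iff] at hchain
    have hmat : Y - ((1-t) • Z + t • Y') = (Y - Z) - t • D := by
      rw [hD]
      ext i j
      simp only [Matrix.sub_apply, Matrix.add_apply, Matrix.smul_apply, smul_eq_mul]
      ring
    rw [hmat, frobInner_expand (Y - Z) (t • D), frobInner_smul_right, frobInner_smul_left,
      frobInner_smul_right] at hchain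
    nlinarith [hchain]
  refine le_of_forall_pos_le_add fun ε hε => ?_
  have hq0 : 0 ≤ frobInner D D := frobInner_self_nonneg D
  set t : ℝ := min 1 (ε / (frobInner D D + 1)) with htdef
  have ht0 : 0 < t := lt_min one_pos (div_pos hε (by linarith))
  have ht1 : t ≤ 1 := min_le_left _ _
  have htq : t * (frobInner D D + 1) ≤ ε := by
    have h1 : t ≤ ε / (frobInner D D + 1) := min_le_right _ _
    calc t * (frobInner D D + 1) ≤ (ε / (frobInner D D + 1)) * (frobInner D D + 1) :=
          mul_le_mul_of_nonneg_right h1 (by linarith)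
      _ = ε := div_mul_cancel₀ _ (by linarith)
  have hkey := ht t ht0 ht1
  nlinarith [hkey, htq, hq0, ht0]

lemma prox_fenchelConj (Ψ : Matrix (Fin n) (Fin s) ℝ → EReal)
    (hΨ_ne_bot : ∀ Y, Ψ Y ≠ ⊥)
    {Y Z : Matrix (Fin n) (Fin s) ℝ} {ψZ : ℝ} (hψZ : Ψ Z = (ψZ : EReal))
    (hsub : ∀ Y', ((frobInner (Y - Z) (Y' - Z) + ψZ : ℝ) : EReal) ≤ Ψ Y') :
    fenchelConj Ψ (Y - Z) = ((frobInner (Y - Z) Z - ψZ : ℝ) : EReal) := by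
  apply le_antisymm
  · rw [fenchelConj]
    apply iSup_le
    intro Y'
    by_cases hY't : Ψ Y' = ⊤
    · rw [hY't, EReal.sub_top]
      exact bot_le
    obtain ⟨ψ', hψ'⟩ : ∃ r : ℝ, Ψ Y' = (r : EReal) :=
      ⟨_, (EReal.coe_toReal hY't (hΨ_ne_bot Y')).symm⟩
    have h := hsub Y'
    rw [hψ', EReal.coe_le_coe_iff] at h
    rw [hψ', ← EReal.coe_sub, EReal.coe_le_coe_iff]
    have hexp : frobInner (Y - Z) (Y' - Z) = frobInner (Y - Z) Y' - frobInner (Y - Z) Z :=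
      frobInner_sub_right _ _ _
    linarith [h, hexp]
  · refine le_trans ?_ (le_iSup _ Z)
    rw [hψZ, ← EReal.coe_sub]

lemma moreau_eq (Ψ : Matrix (Fin n) (Fin s) ℝ → EReal)
    {Y Z : Matrix (Fin n) (Fin s) ℝ} {ψZ : ℝ} (hψZ : Ψ Z = (ψZ : EReal))
    (hmin : ∀ Z', phi Ψ Y Z ≤ phi Ψ Y Z') :
    moreau Ψ Y = ((1/2 * frobInner (Y - Z) (Y - Z) + ψZ : ℝ) : EReal) := by
  apply le_antisymm
  · refine le_trans (iInf_le _ Z) ?_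
    rw [hψZ, ← EReal.coe_add]
  · exact le_iInf fun Z' => by
      rw [EReal.coe_add, ← hψZ]
      exact hmin Z'

lemma neg_moreau_le (Ψ : Matrix (Fin n) (Fin s) ℝ → EReal)
    (hΨ_ne_bot : ∀ Y, Ψ Y ≠ ⊥)
    {Y Z : Matrix (Fin n) (Fin s) ℝ} {ψZ : ℝ} (hψZ : Ψ Z = (ψZ : EReal))
    (hmin : ∀ Z', phi Ψ Y Z ≤ phi Ψ Y Z') (H : Matrix (Fin n) (Fin s) ℝ) :
    -(moreau Ψ Y) ≤ (((1 / 2) * frobInner H H : ℝ) : EReal) + fenchelConj Ψ H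
      - ((frobInner H Y : ℝ) : EReal) := by
  rw [moreau_eq Ψ hψZ hmin]
  by_cases hF : fenchelConj Ψ H = ⊤
  · rw [hF, EReal.add_top_of_ne_bot (EReal.coe_ne_bot _), EReal.top_sub_coe]
    exact le_top
  · have hterm : ((frobInner H Z - ψZ : ℝ) : EReal) ≤ fenchelConj Ψ H := by
      have h := le_iSup (fun Y' => ((frobInner H Y' : ℝ) : EReal) - Ψ Y') Z
      rw [hψZ, ← EReal.coe_sub] at h
      exact h
    have hFbot : fenchelConj Ψ H ≠ ⊥ := fun hbot => (EReal.coe_ne_bot _)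
      (le_bot_iff.1 (hbot ▸ hterm))
    obtain ⟨F, hFr⟩ : ∃ r : ℝ, fenchelConj Ψ H = (r : EReal) :=
      ⟨_, (EReal.coe_toReal hF hFbot).symm⟩
    have hFge : frobInner H Z - ψZ ≤ F := by
      rw [hFr] at hterm
      exact_mod_cast hterm
    rw [hFr, ← EReal.coe_add, ← EReal.coe_sub, ← EReal.coe_neg, EReal.coe_le_coe_iff]
    have hy := young H (Y - Z)
    have hsr := frobInner_sub_right H Y Z
    linarith

lemma inner_sum_smul {m m' : ℕ} (x : Fin m → ℝ) (y : Fin m' → ℝ) (a : Fin m → 𝓗)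
    (b : Fin m' → 𝓗) :
    ⟪∑ i, x i • a i, ∑ j, y j • b j⟫ = ∑ i, ∑ j, x i * y j * ⟪a i, b j⟫ := by
  rw [sum_inner]
  refine Finset.sum_congr rfl fun i _ => ?_
  rw [inner_sum]
  refine Finset.sum_congr rfl fun j _ => ?_
  rw [real_inner_smul_left, real_inner_smul_right]
  ring

lemma spec_package (v : Fin n → 𝓗) {G : Matrix (Fin n) (Fin n) ℝ}
    (hGdef : G = Matrix.of fun i j => ⟪v i, v j⟫) (hGps : G.PosSemidef)
    (H : Matrix (Fin n) (Fin s) ℝ) :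
    ∃ (lam : Fin s → ℝ) (p : Fin s → Fin s → ℝ) (u ut : Fin s → 𝓗),
      (∀ k, 0 ≤ lam k) ∧
      (∀ k l, ∑ j, p k j * p l j = if k = l then 1 else 0) ∧
      (∀ i j, ∑ k, p k i * p k j = if i = j then 1 else 0) ∧
      (∀ k, ut k = ∑ j, p k j • u j) ∧
      (∀ j k, ⟪u j, ut k⟫ = lam k * p k j) ∧
      (∀ k l, ⟪ut k, ut l⟫ = if k = l then lam k else 0) ∧
      (∀ W : Fin s → 𝓗, frobInner H (Matrix.of fun i j => ⟪v i, W j⟫) = ∑ j, ⟪u j, W j⟫) ∧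
      (∀ W : Fin s → 𝓗, ∑ j, ⟪u j, W j⟫ = ∑ k, ⟪ut k, ∑ j, p k j • W j⟫) ∧
      ((CFC.sqrt (Hᵀ * G * H)).trace = ∑ k, Real.sqrt (lam k)) := by
  have hK : (Hᵀ * G * H).PosSemidef := transposeMulMul_posSemidef hGps H
  set lam : Fin s → ℝ := hK.1.eigenvalues with hlam
  set p : Fin s → Fin s → ℝ := fun k j => hK.1.eigenvectorBasis k j with hp
  set u : Fin s → 𝓗 := fun j => ∑ i, H i j • v i with hu
  set ut : Fin s → 𝓗 := fun k => ∑ j, p k j • u j with hut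
  -- orthonormality
  have horth : ∀ k l, ∑ j, p k j * p l j = if k = l then 1 else 0 := by
    intro k l
    have h := orthonormal_iff_ite.mp (hK.1.eigenvectorBasis).orthonormal k l
    rw [PiLp.inner_apply] at h
    simp only [RCLike.inner_apply, conj_trivial] at h
    rw [← h]; exact Finset.sum_congr rfl fun j _ => mul_comm _ _
  have hcomp : ∀ i j, ∑ k, p k i * p k j = if i = j then 1 else 0 := by
    intro i j
    have h := (hK.1.eigenvectorBasis).sum_inner_mul_inner
      (EuclideanSpace.single i (1:ℝ)) (EuclideanSpace.single j (1:ℝ))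
    simp only [EuclideanSpace.inner_single_left, EuclideanSpace.inner_single_right,
      conj_trivial, one_mul, mul_one] at h
    rw [h]
    simp [EuclideanSpace.single_apply, eq_comm]
  have heig : ∀ k i, ∑ j, (Hᵀ * G * H) i j * p k j = lam k * p k i := by
    intro k i
    have h := congr_fun (hK.1.mulVec_eigenvectorBasis k) i
    simpa [Matrix.mulVec, dotProduct, hp, hlam] using h
  -- Gram of u
  have huu : ∀ j j', ⟪u j, u j'⟫ = (Hᵀ * G * H) j j' := by
    intro j j'
    rw [hu]
    rw [inner_sum_smul (fun i => H i j) (fun i => H i j') v v]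
    simp only [Matrix.mul_apply, Matrix.transpose_apply, Finset.sum_mul]
    rw [Finset.sum_comm]
    refine Finset.sum_congr rfl fun i _ => Finset.sum_congr rfl fun i' _ => ?_
    rw [hGdef]
    simp only [Matrix.of_apply]
    ring
  have hujk : ∀ j k, ⟪u j, ut k⟫ = lam k * p k j := by
    intro j k
    rw [hut]
    rw [inner_sum]
    rw [← heig k j]
    refine Finset.sum_congr rfl fun j' _ => ?_
    rw [real_inner_smul_right, huu]
    ring
  have hutut : ∀ k l, ⟪ut k, ut l⟫ = if k = l then lam k else 0 := by
    intro k l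
    rw [hut, sum_inner]
    have h1 : ∀ j, ⟪p k j • u j, ut l⟫ = p k j * (lam l * p l j) := by
      intro j
      rw [real_inner_smul_left, hujk]
    rw [Finset.sum_congr rfl fun j _ => h1 j]
    have h2 : ∑ j, p k j * (lam l * p l j) = lam l * ∑ j, p k j * p l j := by
      rw [Finset.mul_sum]
      exact Finset.sum_congr rfl fun j _ => by ring
    rw [h2, horth]
    split_ifs with h
    · subst h; ring
    · ring
  have hfrob : ∀ W : Fin s → 𝓗,
      frobInner H (Matrix.of fun i j => ⟪v i, W j⟫) = ∑ j, ⟪u j, W j⟫ := by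
    intro W
    rw [frobInner_eq_sum]
    refine Finset.sum_congr rfl fun j _ => ?_
    rw [hu, sum_inner]
    refine Finset.sum_congr rfl fun i _ => ?_
    rw [real_inner_smul_left]
    simp [Matrix.of_apply]
  have hswap : ∀ W : Fin s → 𝓗, ∑ j, ⟪u j, W j⟫ = ∑ k, ⟪ut k, ∑ j, p k j • W j⟫ := by
    intro W
    have h1 : ∀ k, ⟪ut k, ∑ j, p k j • W j⟫ = ∑ j', ∑ j, p k j' * p k j * ⟪u j', W j⟫ := by
      intro k
      rw [hut]
      exact inner_sum_smul (p k) (p k) u W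
    simp_rw [h1]
    rw [Finset.sum_comm]
    refine Finset.sum_congr rfl fun j' _ => ?_
    rw [Finset.sum_comm]
    have h2 : ∀ j, ∑ k, p k j' * p k j * ⟪u j', W j⟫
        = (if j' = j then (1:ℝ) else 0) * ⟪u j', W j⟫ := by
      intro j
      rw [← hcomp j' j, Finset.sum_mul]
    simp_rw [h2]
    simp
  have htr : (CFC.sqrt (Hᵀ * G * H)).trace = ∑ k, Real.sqrt (lam k) := by
    rw [CFC.sqrt_eq_real_sqrt _ hK.nonneg, cfcₙ_eq_cfc, hK.1.cfc_eq, Matrix.IsHermitian.cfc,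
      Unitary.conjStarAlgAut_apply, Matrix.trace_mul_cycle, Unitary.coe_star_mul_self,
      Matrix.one_mul, Matrix.trace_diagonal]
    simp [hlam]
  exact ⟨lam, p, u, ut, hK.eigenvalues_nonneg, horth, hcomp, fun k => rfl, hujk, hutut,
    hfrob, hswap, htr⟩

lemma dot_one_sub_gram (W : Fin s → 𝓗) (x : Fin s → ℝ) :
    dotProduct (star x) (((1 : Matrix (Fin s) (Fin s) ℝ) - gram W) *ᵥ x)
      = ∑ j, x j * x j - ∑ j, ∑ j', x j * ⟪W j, W j'⟫ * x j' := by
  have h1 : dotProduct (star x) (((1 : Matrix (Fin s) (Fin s) ℝ) - gram W) *ᵥ x)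
      = ∑ j, x j * (∑ j', ((if j = j' then (1:ℝ) else 0) - ⟪W j, W j'⟫) * x j') := by
    simp [dotProduct, Matrix.mulVec, Matrix.sub_apply, Matrix.one_apply, gram,
      Matrix.of_apply, star_trivial]
  rw [h1, ← Finset.sum_sub_distrib]
  refine Finset.sum_congr rfl fun j _ => ?_
  rw [Finset.mul_sum]
  have h2 : ∀ j', x j * (((if j = j' then (1:ℝ) else 0) - ⟪W j, W j'⟫) * x j')
      = (if j = j' then x j * x j' else 0) - x j * ⟪W j, W j'⟫ * x j' := by
    intro j'
    by_cases h : j = j' <;> simp [h] <;> ring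
  simp_rw [h2]
  rw [Finset.sum_sub_distrib, Finset.sum_ite_eq]
  simp

lemma frob_le_trace_sqrt (v : Fin n → 𝓗) {G : Matrix (Fin n) (Fin n) ℝ}
    (hGdef : G = Matrix.of fun i j => ⟪v i, v j⟫) (hGps : G.PosSemidef)
    (H : Matrix (Fin n) (Fin s) ℝ) {W : Fin s → 𝓗}
    (hW : ((1 : Matrix (Fin s) (Fin s) ℝ) - gram W).PosSemidef) :
    frobInner H (Matrix.of fun i j => ⟪v i, W j⟫)
      ≤ (CFC.sqrt (Hᵀ * G * H)).trace := by
  obtain ⟨lam, p, u, ut, hl0, horth, hcomp, hutdef, hujk, hutut, hfrob, hswap, htr⟩ :=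
    spec_package v hGdef hGps H
  rw [hfrob W, hswap W, htr]
  refine Finset.sum_le_sum fun k _ => ?_
  have h1 : ⟪ut k, ut k⟫ = lam k := by rw [hutut]; simp
  have hnut : ‖ut k‖ = Real.sqrt (lam k) := by
    have h2 : lam k = ‖ut k‖^2 := by rw [← h1, real_inner_self_eq_norm_sq]
    rw [h2, Real.sqrt_sq (norm_nonneg _)]
  have hw2 : ⟪∑ j, p k j • W j, ∑ j, p k j • W j⟫ ≤ 1 := by
    have h3 := hW.dotProduct_mulVec_nonneg (p k)
    rw [dot_one_sub_gram] at h3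
    have h4 : ⟪∑ j, p k j • W j, ∑ j, p k j • W j⟫
        = ∑ j, ∑ j', p k j * ⟪W j, W j'⟫ * p k j' := by
      rw [inner_sum_smul (p k) (p k) W W]
      exact Finset.sum_congr rfl fun j _ => Finset.sum_congr rfl fun j' _ => by ring
    have h5 := horth k k
    rw [if_pos rfl] at h5
    rw [h4]
    linarith
  have hwn : ‖∑ j, p k j • W j‖ ≤ 1 := by
    have h6 : ⟪∑ j, p k j • W j, ∑ j, p k j • W j⟫ = ‖∑ j, p k j • W j‖^2 :=
      real_inner_self_eq_norm_sq _
    nlinarith [norm_nonneg (∑ j, p k j • W j), hw2, h6]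
  calc ⟪ut k, ∑ j, p k j • W j⟫ ≤ ‖ut k‖ * ‖∑ j, p k j • W j‖ := real_inner_le_norm _ _
    _ ≤ Real.sqrt (lam k) * 1 := by
        rw [hnut]
        exact mul_le_mul_of_nonneg_left hwn (Real.sqrt_nonneg _)
    _ = Real.sqrt (lam k) := mul_one _

lemma exists_W_attains (v : Fin n → 𝓗) {G : Matrix (Fin n) (Fin n) ℝ}
    (hGdef : G = Matrix.of fun i j => ⟪v i, v j⟫) (hGps : G.PosSemidef)
    (H : Matrix (Fin n) (Fin s) ℝ) :
    ∃ W : Fin s → 𝓗, ((1 : Matrix (Fin s) (Fin s) ℝ) - gram W).PosSemidef ∧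
      frobInner H (Matrix.of fun i j => ⟪v i, W j⟫)
        = (CFC.sqrt (Hᵀ * G * H)).trace := by
  obtain ⟨lam, p, u, ut, hl0, horth, hcomp, hutdef, hujk, hutut, hfrob, hswap, htr⟩ :=
    spec_package v hGdef hGps H
  set c : Fin s → ℝ := fun k => if lam k = 0 then 0 else (Real.sqrt (lam k))⁻¹ with hc
  set W : Fin s → 𝓗 := fun j => ∑ k, (c k * p k j) • ut k with hWdef
  have hchi : ∀ k, c k * c k * lam k = if lam k = 0 then 0 else 1 := by
    intro k
    by_cases h : lam k = 0
    · simp [hc, h]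
    · have hpos : 0 < lam k := lt_of_le_of_ne (hl0 k) (Ne.symm h)
      have hs : Real.sqrt (lam k) * Real.sqrt (lam k) = lam k := Real.mul_self_sqrt (hl0 k)
      have hsne : Real.sqrt (lam k) ≠ 0 := ne_of_gt (Real.sqrt_pos.2 hpos)
      simp only [hc, if_neg h]
      rw [← hs]
      field_simp
      rw [Real.sqrt_sq (Real.sqrt_nonneg _)]
  have hclam : ∀ k, c k * lam k = Real.sqrt (lam k) := by
    intro k
    by_cases h : lam k = 0
    · simp [hc, h, Real.sqrt_eq_zero', h.le]
    · have hpos : 0 < lam k := lt_of_le_of_ne (hl0 k) (Ne.symm h)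
      have hs : Real.sqrt (lam k) * Real.sqrt (lam k) = lam k := Real.mul_self_sqrt (hl0 k)
      have hsne : Real.sqrt (lam k) ≠ 0 := ne_of_gt (Real.sqrt_pos.2 hpos)
      simp only [hc, if_neg h]
      rw [← hs]
      field_simp
      rw [Real.sqrt_sq (Real.sqrt_nonneg _)]
  have hgram : ∀ j j', ⟪W j, W j'⟫
      = ∑ k, (if lam k = 0 then (0:ℝ) else 1) * (p k j * p k j') := by
    intro j j'
    rw [hWdef]
    rw [inner_sum_smul (fun k => c k * p k j) (fun k => c k * p k j') ut ut]
    refine Finset.sum_congr rfl fun k _ => ?_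
    have h1 : ∀ l, (c k * p k j) * (c l * p l j') * ⟪ut k, ut l⟫
        = if k = l then (c k * c k * lam k) * (p k j * p k j') else 0 := by
      intro l
      rw [hutut]
      split_ifs with h
      · subst h; ring
      · ring
    simp_rw [h1]
    rw [Finset.sum_ite_eq]
    simp [hchi k]
  -- Parseval-type identities
  have hA : ∀ x : Fin s → ℝ, ∑ j, x j * x j
      = ∑ k, (∑ j, p k j * x j) * (∑ j, p k j * x j) := by
    intro x
    have h1 : ∀ k, (∑ j, p k j * x j) * (∑ j', p k j' * x j')
        = ∑ j, ∑ j', (p k j * p k j') * (x j * x j') := by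
      intro k
      rw [Finset.sum_mul]
      refine Finset.sum_congr rfl fun j _ => ?_
      rw [Finset.mul_sum]
      exact Finset.sum_congr rfl fun j' _ => by ring
    simp_rw [h1]
    rw [Finset.sum_comm]
    have h2 : ∀ j, ∑ k, ∑ j', (p k j * p k j') * (x j * x j')
        = ∑ j', (∑ k, p k j * p k j') * (x j * x j') := by
      intro j
      rw [Finset.sum_comm]
      exact Finset.sum_congr rfl fun j' _ => by rw [Finset.sum_mul]
    simp_rw [h2]
    refine Finset.sum_congr rfl fun j _ => ?_
    simp_rw [hcomp]
    simp
  have hpsd : ((1 : Matrix (Fin s) (Fin s) ℝ) - gram W).PosSemidef := by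
    refine Matrix.PosSemidef.of_dotProduct_mulVec_nonneg ?_ ?_
    · have hgs : (gram W).IsHermitian := by
        unfold Matrix.IsHermitian
        ext j j'
        simp [Matrix.conjTranspose_apply, gram, Matrix.of_apply, real_inner_comm]
      exact Matrix.isHermitian_one.sub hgs
    · intro x
      rw [dot_one_sub_gram]
      have hB : ∑ k, (if lam k = 0 then (0:ℝ) else 1)
            * ((∑ j, p k j * x j) * (∑ j, p k j * x j))
          = ∑ j, ∑ j', x j * ⟪W j, W j'⟫ * x j' := by
        have h1 : ∀ k, (if lam k = 0 then (0:ℝ) else 1)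
              * ((∑ j, p k j * x j) * (∑ j', p k j' * x j'))
            = ∑ j, ∑ j', ((if lam k = 0 then (0:ℝ) else 1) * (p k j * p k j')) * (x j * x j') := by
          intro k
          simp only [Finset.sum_mul, Finset.mul_sum]
          exact Finset.sum_congr rfl fun j _ => Finset.sum_congr rfl fun j' _ => by ring
        simp_rw [h1]
        rw [Finset.sum_comm]
        refine Finset.sum_congr rfl fun j _ => ?_
        have h2 : ∑ k, ∑ j', ((if lam k = 0 then (0:ℝ) else 1) * (p k j * p k j')) * (x j * x j')
            = ∑ j', (∑ k, (if lam k = 0 then (0:ℝ) else 1) * (p k j * p k j')) * (x j * x j') := by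
          rw [Finset.sum_comm]
          exact Finset.sum_congr rfl fun j' _ => by rw [Finset.sum_mul]
        rw [h2]
        refine Finset.sum_congr rfl fun j' _ => ?_
        rw [← hgram j j']
        ring
      rw [← hB, hA x, ← Finset.sum_sub_distrib]
      refine Finset.sum_nonneg fun k _ => ?_
      have : (0:ℝ) ≤ (1 - (if lam k = 0 then (0:ℝ) else 1))
          * ((∑ j, p k j * x j) * (∑ j, p k j * x j)) := by
        apply mul_nonneg
        · split_ifs <;> norm_num
        · exact mul_self_nonneg _
      nlinarith [this]
  refine ⟨W, hpsd, ?_⟩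
  rw [hfrob W, htr]
  have h1 : ∀ j, ⟪u j, W j⟫ = ∑ k, (c k * p k j) * (lam k * p k j) := by
    intro j
    rw [hWdef, inner_sum]
    exact Finset.sum_congr rfl fun k _ => by rw [real_inner_smul_right, hujk]
  simp_rw [h1]
  rw [Finset.sum_comm]
  refine Finset.sum_congr rfl fun k _ => ?_
  have h2 : ∑ j, (c k * p k j) * (lam k * p k j) = (c k * lam k) * ∑ j, p k j * p k j := by
    rw [Finset.mul_sum]
    exact Finset.sum_congr rfl fun j _ => by ring
  rw [h2, horth, if_pos rfl, mul_one, hclam]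

end KpcaAux

open KpcaAux in
/-- Dualization of KPCA with Moreau-envelope objective `f = (1/2)‖·‖_F² □ Ψ`:
`inf { -f(ΓW) : 𝒢(W) ⪯ Iₛ } = inf_H ( (1/2)‖H‖_F² + Ψ⋆(H) - Tr √(Hᵀ G H) )`. -/
theorem moreau_kpca_duality
    {𝓗 : Type*} [NormedAddCommGroup 𝓗] [InnerProductSpace ℝ 𝓗]
    {n s : ℕ} (v : Fin n → 𝓗)
    (G : Matrix (Fin n) (Fin n) ℝ) (hGdef : G = Matrix.of fun i j => ⟪v i, v j⟫)
    (hG : G.PosDef)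
    (Ψ : Matrix (Fin n) (Fin s) ℝ → EReal)
    (hΨ_ne_top : ∃ Y, Ψ Y ≠ ⊤) (hΨ_ne_bot : ∀ Y, Ψ Y ≠ ⊥)
    (hΨ_convex : ∀ (Y Z : Matrix (Fin n) (Fin s) ℝ) (a b : ℝ),
      0 ≤ a → 0 ≤ b → a + b = 1 →
      Ψ (a • Y + b • Z) ≤ (a : EReal) * Ψ Y + (b : EReal) * Ψ Z)
    (hΨ_lsc : LowerSemicontinuous Ψ) :
    (⨅ W : {W : Fin s → 𝓗 // ((1 : Matrix (Fin s) (Fin s) ℝ) - gram W).PosSemidef},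
        -(moreau Ψ (Matrix.of fun i j => ⟪v i, (W : Fin s → 𝓗) j⟫))) =
    (⨅ H : Matrix (Fin n) (Fin s) ℝ,
        (((1 / 2) * frobInner H H : ℝ) : EReal) + fenchelConj Ψ H
          - (((CFC.sqrt (Hᵀ * G * H)).trace : ℝ) : EReal)) := by
  apply le_antisymm
  · refine le_iInf fun H => ?_
    obtain ⟨W, hWpsd, hWeq⟩ := exists_W_attains v hGdef hG.posSemidef H
    refine iInf_le_of_le ⟨W, hWpsd⟩ ?_
    rw [← hWeq]
    obtain ⟨Z, hZtop, hZmin⟩ := exists_prox Ψ hΨ_ne_top hΨ_ne_bot hΨ_convex hΨ_lsc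
      (Matrix.of fun i j => ⟪v i, W j⟫)
    obtain ⟨ψZ, hψZ⟩ : ∃ r : ℝ, Ψ Z = (r : EReal) :=
      ⟨_, (EReal.coe_toReal hZtop (hΨ_ne_bot Z)).symm⟩
    exact neg_moreau_le Ψ hΨ_ne_bot hψZ hZmin H
  · refine le_iInf fun Wp => ?_
    obtain ⟨W, hW⟩ := Wp
    obtain ⟨Z, hZtop, hZmin⟩ := exists_prox Ψ hΨ_ne_top hΨ_ne_bot hΨ_convex hΨ_lsc
      (Matrix.of fun i j => ⟪v i, W j⟫)
    obtain ⟨ψZ, hψZ⟩ : ∃ r : ℝ, Ψ Z = (r : EReal) :=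
      ⟨_, (EReal.coe_toReal hZtop (hΨ_ne_bot Z)).symm⟩
    have hsub := prox_subgradient Ψ hΨ_ne_bot hΨ_convex hψZ hZmin
    have hfc := prox_fenchelConj Ψ hΨ_ne_bot hψZ hsub
    refine iInf_le_of_le ((Matrix.of fun i j => ⟪v i, W j⟫) - Z) ?_
    show (((1 / 2) * frobInner ((Matrix.of fun i j => ⟪v i, W j⟫) - Z)
        ((Matrix.of fun i j => ⟪v i, W j⟫) - Z) : ℝ) : EReal)
        + fenchelConj Ψ ((Matrix.of fun i j => ⟪v i, W j⟫) - Z)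
        - (((CFC.sqrt (((Matrix.of fun i j => ⟪v i, W j⟫) - Z)ᵀ * G
            * ((Matrix.of fun i j => ⟪v i, W j⟫) - Z))).trace : ℝ) : EReal)
      ≤ -(moreau Ψ (Matrix.of fun i j => ⟪v i, W j⟫))
    rw [moreau_eq Ψ hψZ hZmin, hfc]
    have htr_ge := frob_le_trace_sqrt v hGdef hG.posSemidef
      ((Matrix.of fun i j => ⟪v i, W j⟫) - Z) hW
    rw [← EReal.coe_add, ← EReal.coe_sub, ← EReal.coe_neg, EReal.coe_le_coe_iff]
    have hsr := frobInner_sub_right ((Matrix.of fun i j => ⟪v i, W j⟫) - Z)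
      (Matrix.of fun i j => ⟪v i, W j⟫) Z
    linarith
end
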